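/- Let (V, c) be a braided vector space over a field k with a fixed basis X, such that for all x, y ∈ X one has c(x ⊗ y) = λ_{x,y} · (x ▷ y) ⊗ x for some nonzero scalars λ_{x,y} and some function ▷ : X × X → X with each map y ↦ x ▷ y bijective. Then (X, ▷) is a rack; in particular the self-distributivity law x ▷ (y ▷ z) = (x ▷ y) ▷ (x ▷ z) holds for all x, y, z ∈ X. -/

import Mathlib

open TensorProduct

lemma aux_basis_smul_eq {K M ι : Type*} [Field K] [AddCommGroup M] [Module K M]
    (B : Module.Basis ι K M) {μ ν : K} {i j : ι} (hμ : μ ≠ 0) (h : μ • B i = ν • B j) : i = j := by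
  by_contra hij
  have h2 := congrArg (fun v => B.repr v i) h
  simp [Finsupp.single_apply, hij, Ne.symm hij] at h2
  exact hμ h2

theorem stmt_1 {K : Type*} [Field K] {V : Type*} [AddCommGroup V] [Module K V]
    {X : Type*} (b : Module.Basis X K V)
    (c : V ⊗[K] V ≃ₗ[K] V ⊗[K] V)
    (hbraid :
      letI α := (TensorProduct.assoc K V V V).toLinearMap
      letI α' := (TensorProduct.assoc K V V V).symm.toLinearMap
      letI c1 : V ⊗[K] (V ⊗[K] V) →ₗ[K] V ⊗[K] (V ⊗[K] V) :=
        α ∘ₗ (TensorProduct.map c.toLinearMap LinearMap.id) ∘ₗ α'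
      letI c2 : V ⊗[K] (V ⊗[K] V) →ₗ[K] V ⊗[K] (V ⊗[K] V) :=
        TensorProduct.map LinearMap.id c.toLinearMap
      c1 ∘ₗ c2 ∘ₗ c1 = c2 ∘ₗ c1 ∘ₗ c2)
    (lam : X → X → K) (hlam : ∀ x y, lam x y ≠ 0)
    (op : X → X → X) (hbij : ∀ x, Function.Bijective (op x))
    (hc : ∀ x y, c (b x ⊗ₜ[K] b y) = lam x y • (b (op x y) ⊗ₜ[K] b x)) :
    ∀ x y z, op x (op y z) = op (op x y) (op x z) := by
  intro x y z
  have h := LinearMap.congr_fun hbraid (b x ⊗ₜ[K] (b y ⊗ₜ[K] b z))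
  simp only [LinearMap.coe_comp, Function.comp_apply, TensorProduct.map_tmul,
    LinearMap.id_coe, id_eq, LinearEquiv.coe_coe, TensorProduct.assoc_symm_tmul,
    TensorProduct.assoc_tmul, hc, map_smul, ← TensorProduct.smul_tmul',
    TensorProduct.tmul_smul, smul_smul] at h
  have h' : (lam x y * lam x z * lam (op x y) (op x z)) •
      (b.tensorProduct (b.tensorProduct b)) (op (op x y) (op x z), (op x y, x)) =
      (lam y z * lam x (op y z) * lam x y) •
      (b.tensorProduct (b.tensorProduct b)) (op x (op y z), (op x y, x)) := by
    simpa only [Module.Basis.tensorProduct_apply] using h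
  have hne : lam x y * lam x z * lam (op x y) (op x z) ≠ 0 :=
    mul_ne_zero (mul_ne_zero (hlam _ _) (hlam _ _)) (hlam _ _)
  have := aux_basis_smul_eq _ hne h'
  exact (congrArg Prod.fst this).symm
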